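/- Let a, b ∈ [0, 1). There exists δ ∈ (0, 1) such that for every local inverse g of f̄_{a,b} at 0 whose domain contains the image f̄_{a,b}({z : |z| ≤ δ}), and every odd integer k ≥ 1: g_k = (2/(π·k)) · Im( ∫₀^{π/2} f̄_{a,b}(δ·e^{iθ})^{−k} · i·δ·e^{iθ} dθ ), where g_k is the k-th Taylor coefficient of g at 0 (the integral is the contour integral of f̄_{a,b}(z)^{−k} over the first-quadrant quarter circle of radius δ). -/

import Mathlib

noncomputable section

open Real Set Filter intervalIntegral

/-- The rising factorial `(x)_k = x (x+1) ⋯ (x+k−1)`. -/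
def risingFac (x : ℝ) : ℕ → ℝ
  | 0 => 1
  | k + 1 => risingFac x k * (x + k)

/-- `c_k(a,b) = ((1−a)/2)_k ((1−b)/2)_k / ((3/2)_k k!)`. -/
def ckab (a b : ℝ) (k : ℕ) : ℝ :=
  risingFac ((1 - a) / 2) k * risingFac ((1 - b) / 2) k /
    (risingFac (3 / 2) k * (Nat.factorial k))

/-- `f̄_{a,b}(z) = Σ_k c_k(a,b) z^{2k+1}` as a function on `ℂ`. -/
def fbarC (a b : ℝ) (z : ℂ) : ℂ :=
  ∑' k : ℕ, (ckab a b k : ℂ) * z ^ (2 * k + 1)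

/-- `g` is a local inverse of `F` at `0`: `g` is analytic on a neighborhood of `0` and
`g (F z) = z` for all `z` in a neighborhood of `0`. -/
def IsLocalInverseAtZero (F g : ℂ → ℂ) : Prop :=
  (∃ U ∈ nhds (0 : ℂ), ∀ z ∈ U, AnalyticAt ℂ g z) ∧ ∀ᶠ z in nhds (0 : ℂ), g (F z) = z

/-- The `k`-th Taylor coefficient of `g` at `0`: `g^{(k)}(0)/k!`. -/
def taylorCoeff (g : ℂ → ℂ) (k : ℕ) : ℂ :=
  iteratedDeriv k g 0 / (Nat.factorial k)

open Metric

/-! ### Auxiliary lemmas -/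

lemma risingFac_nonneg {x : ℝ} (hx : 0 ≤ x) : ∀ k, 0 ≤ risingFac x k
  | 0 => zero_le_one
  | (k+1) => mul_nonneg (risingFac_nonneg hx k) (by positivity)

lemma risingFac_pos {x : ℝ} (hx : 0 < x) : ∀ k, 0 < risingFac x k
  | 0 => one_pos
  | (k+1) => mul_pos (risingFac_pos hx k) (by positivity)

lemma risingFac_le {x y : ℝ} (hx : 0 ≤ x) (hxy : x ≤ y) : ∀ k, risingFac x k ≤ risingFac y k
  | 0 => le_rfl
  | (k+1) => by
      have h1 := risingFac_le hx hxy k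
      have h2 := risingFac_nonneg hx k
      have h3 := risingFac_nonneg (hx.trans hxy) k
      have h4 : (0:ℝ) ≤ x + k := by positivity
      exact mul_le_mul h1 (by linarith) h4 h3

lemma risingFac_one : ∀ k, risingFac 1 k = Nat.factorial k
  | 0 => by simp [risingFac]
  | (k+1) => by
      rw [risingFac, risingFac_one k, Nat.factorial_succ]
      push_cast; ring

lemma ckab_nonneg {a b : ℝ} (ha : a ∈ Set.Ico (0:ℝ) 1) (hb : b ∈ Set.Ico (0:ℝ) 1) (k : ℕ) :
    0 ≤ ckab a b k := by
  have h1 : (0:ℝ) ≤ (1 - a)/2 := by linarith [ha.2]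
  have h2 : (0:ℝ) ≤ (1 - b)/2 := by linarith [hb.2]
  have h3 : (0:ℝ) < risingFac (3/2) k := risingFac_pos (by norm_num) k
  have h4 : (0:ℝ) < (Nat.factorial k : ℝ) := by positivity
  exact div_nonneg (mul_nonneg (risingFac_nonneg h1 k) (risingFac_nonneg h2 k))
    (le_of_lt (mul_pos h3 h4))

lemma ckab_le_one {a b : ℝ} (ha : a ∈ Set.Ico (0:ℝ) 1) (hb : b ∈ Set.Ico (0:ℝ) 1) (k : ℕ) :
    ckab a b k ≤ 1 := by
  have h1 : (0:ℝ) ≤ (1 - a)/2 := by linarith [ha.2]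
  have h2 : (0:ℝ) ≤ (1 - b)/2 := by linarith [hb.2]
  have h3 : (0:ℝ) < risingFac (3/2) k := risingFac_pos (by norm_num) k
  have h4 : (0:ℝ) < (Nat.factorial k : ℝ) := by positivity
  rw [ckab, div_le_one (by positivity)]
  calc risingFac ((1-a)/2) k * risingFac ((1-b)/2) k
      ≤ risingFac (3/2) k * risingFac 1 k :=
        mul_le_mul (risingFac_le h1 (by linarith [ha.1]) k)
          (risingFac_le h2 (by linarith [hb.1]) k) (risingFac_nonneg h2 k)
          (risingFac_nonneg (by norm_num) k)
    _ = risingFac (3/2) k * (Nat.factorial k) := by rw [risingFac_one]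

lemma ckab_zero (a b : ℝ) : ckab a b 0 = 1 := by simp [ckab, risingFac]

/-- The even-part sum `∑ c_k w^k`. -/
def Vs (c : ℕ → ℝ) (w : ℂ) : ℂ := ∑' k : ℕ, ((c k : ℝ) : ℂ) * w ^ k

lemma Vs_diffAt {c : ℕ → ℝ} (hc : ∀ k, |c k| ≤ 1) {w : ℂ} (hw : ‖w‖ < 1) :
    DifferentiableAt ℂ (Vs c) w := by
  set r : ℝ := (‖w‖ + 1) / 2 with hr
  have hr0 : 0 < r := by positivity
  have hr1 : r < 1 := by simp only [hr]; linarith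
  have hwr : ‖w‖ < r := by simp only [hr]; linarith
  have hdiff : DifferentiableOn ℂ (Vs c) (ball (0:ℂ) r) := by
    apply Complex.differentiableOn_tsum_of_summable_norm
      (summable_geometric_of_lt_one hr0.le hr1)
    · exact fun k => (differentiable_const _ |>.mul (differentiable_pow k)).differentiableOn
    · exact isOpen_ball
    · intro k z hz
      rw [mem_ball_zero_iff] at hz
      have h1 : ‖((c k : ℝ):ℂ)‖ ≤ 1 := by rw [Complex.norm_real]; exact hc k
      calc ‖((c k : ℝ):ℂ) * z ^ k‖ = ‖((c k : ℝ):ℂ)‖ * ‖z‖ ^ k := by rw [norm_mul, norm_pow]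
        _ ≤ 1 * r ^ k :=
            mul_le_mul h1 (pow_le_pow_left₀ (norm_nonneg z) hz.le k) (by positivity) zero_le_one
        _ = r ^ k := one_mul _
  exact hdiff.differentiableAt (isOpen_ball.mem_nhds (mem_ball_zero_iff.2 hwr))

lemma Vs_zero (c : ℕ → ℝ) : Vs c 0 = ((c 0 : ℝ) : ℂ) := by
  rw [Vs, tsum_eq_single 0 (fun k hk => by rw [zero_pow hk, mul_zero])]
  simp

lemma fbar_eq_mul (a b : ℝ) (z : ℂ) : fbarC a b z = z * Vs (ckab a b) (z^2) := by
  rw [fbarC, Vs, ← tsum_mul_left]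
  exact tsum_congr fun k => by rw [← pow_mul]; ring

lemma fbar_odd (a b : ℝ) (z : ℂ) : fbarC a b (-z) = - fbarC a b z := by
  rw [fbarC, fbarC, ← tsum_neg]
  refine tsum_congr fun k => ?_
  rw [Odd.neg_pow ⟨k, by ring⟩]
  ring

lemma fbar_conj (a b : ℝ) (z : ℂ) :
    fbarC a b ((starRingEnd ℂ) z) = (starRingEnd ℂ) (fbarC a b z) := by
  have h := (Complex.conjCLE : ℂ ≃L[ℝ] ℂ).map_tsum
    (f := fun k : ℕ => ((ckab a b k : ℝ):ℂ) * z ^ (2*k+1)) (L := SummationFilter.unconditional ℕ)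
  simp only [Complex.conjCLE_apply] at h
  rw [fbarC, fbarC, h]
  exact tsum_congr fun k => by simp [map_mul, map_pow, Complex.conj_ofReal]

open Complex in
lemma coeff_formula {f u g : ℂ → ℂ} {δ : ℝ} (hδ0 : 0 < δ) (hδ1 : δ < 1)
    (hfu : ∀ z, f z = z * u z)
    (hud : ∀ z ∈ ball (0:ℂ) 1, DifferentiableAt ℂ u z)
    (hune : ∀ z ∈ closedBall (0:ℂ) δ, u z ≠ 0)
    (hodd : ∀ z, f (-z) = - f z)
    (hconj : ∀ z ∈ closedBall (0:ℂ) δ, f ((starRingEnd ℂ) z) = (starRingEnd ℂ) (f z))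
    (hgf : ∀ z ∈ closedBall (0:ℂ) δ, g (f z) = z)
    (hgan : AnalyticAt ℂ g 0)
    {k : ℕ} (hk : Odd k) (hk1 : 1 ≤ k) :
    taylorCoeff g k =
      (((2 / (Real.pi * k)) *
          (∫ θ in (0:ℝ)..(Real.pi / 2),
            (f (δ * Complex.exp (θ * Complex.I))) ^ (-(k : ℤ)) *
              (Complex.I * δ * Complex.exp (θ * Complex.I))).im : ℝ) : ℂ) := by
  -- basic facts about f
  have hδsub : closedBall (0:ℂ) δ ⊆ ball 0 1 := closedBall_subset_ball hδ1
  have hf' : ∀ z ∈ ball (0:ℂ) 1, HasDerivAt f (u z + z * deriv u z) z := by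
    intro z hz
    have h := (hasDerivAt_id z).mul (hud z hz).hasDerivAt
    rw [show (id * u) = f from funext fun y => (hfu y).symm] at h
    simpa using h
  have hfd : ∀ z ∈ ball (0:ℂ) 1, DifferentiableAt ℂ f z :=
    fun z hz => (hf' z hz).differentiableAt
  have hfderiv : ∀ z ∈ ball (0:ℂ) 1, deriv f z = u z + z * deriv u z :=
    fun z hz => (hf' z hz).deriv
  have hf0 : f 0 = 0 := by rw [hfu]; ring
  have hfne : ∀ z ∈ closedBall (0:ℂ) δ, z ≠ 0 → f z ≠ 0 :=
    fun z hz h0 => by rw [hfu]; exact mul_ne_zero h0 (hune z hz)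
  have hfdo : DifferentiableOn ℂ f (ball 0 1) := fun z hz => (hfd z hz).differentiableWithinAt
  have hfan : AnalyticOnNhd ℂ f (ball 0 1) := hfdo.analyticOnNhd isOpen_ball
  have hf'd : ∀ z ∈ ball (0:ℂ) 1, DifferentiableAt ℂ (deriv f) z :=
    fun z hz => ((hfan.deriv) z hz).differentiableAt
  have hudo : DifferentiableOn ℂ u (ball 0 1) := fun z hz => (hud z hz).differentiableWithinAt
  have huan : AnalyticOnNhd ℂ u (ball 0 1) := hudo.analyticOnNhd isOpen_ball
  have hu'd : ∀ z ∈ ball (0:ℂ) 1, DifferentiableAt ℂ (deriv u) z :=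
    fun z hz => ((huan.deriv) z hz).differentiableAt
  -- power series of g
  obtain ⟨q, r, hq⟩ : ∃ q r, HasFPowerSeriesOnBall g q 0 r := by
    obtain ⟨q, hq1⟩ := hgan; obtain ⟨r, hq⟩ := hq1; exact ⟨q, r, hq⟩
  obtain ⟨s, hs0, hsr⟩ := ENNReal.lt_iff_exists_nnreal_btwn.mp hq.r_pos
  have hspos : (0:ℝ) < s := by exact_mod_cast hs0
  -- choice of ρ
  obtain ⟨ρ, hρ0, hρδ, hρ1, hρs⟩ : ∃ ρ : ℝ, 0 < ρ ∧ ρ ≤ δ ∧ ρ < 1 ∧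
      ∀ z : ℂ, ‖z‖ = ρ → ‖f z‖ < s := by
    have hcf0 : ContinuousAt f 0 := (hfd 0 (by simp)).continuousAt
    have hev : ∀ᶠ z in nhds (0:ℂ), ‖f z‖ < s := by
      have h1 : Tendsto f (nhds 0) (nhds 0) := by have := hcf0.tendsto; rwa [hf0] at this
      have := h1 (Metric.ball_mem_nhds (0:ℂ) hspos)
      filter_upwards [this] with z hz using mem_ball_zero_iff.mp hz
    obtain ⟨ε, hε, hball⟩ := Metric.eventually_nhds_iff_ball.mp hev
    refine ⟨min (ε/2) δ, by positivity, min_le_right _ _,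
      lt_of_le_of_lt (min_le_right _ _) hδ1, ?_⟩
    intro z hz
    apply hball
    rw [mem_ball_zero_iff, hz]
    exact lt_of_le_of_lt (min_le_left _ _) (by linarith)
  -- facts on the sphere
  have hsph : ∀ z ∈ sphere (0:ℂ) ρ, ‖z‖ = ρ := fun z hz => mem_sphere_zero_iff_norm.mp hz
  have hsub : sphere (0:ℂ) ρ ⊆ closedBall 0 δ := fun z hz => by
    rw [mem_closedBall_zero_iff, hsph z hz]; exact hρδ
  have hsub1 : sphere (0:ℂ) ρ ⊆ ball 0 1 := fun z hz => hδsub (hsub hz)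
  have hzne : ∀ z ∈ sphere (0:ℂ) ρ, z ≠ 0 := fun z hz h0 => by
    rw [h0] at hz; have := hsph 0 hz; simp at this; exact hρ0.ne' this.symm
  have hfzne : ∀ z ∈ sphere (0:ℂ) ρ, f z ≠ 0 := fun z hz => hfne z (hsub hz) (hzne z hz)
  -- the key residue computations
  have key : ∀ m : ℤ, (∮ z in C(0, ρ), f z ^ m * deriv f z)
      = if m = -1 then 2 * π * Complex.I else 0 := by
    intro m
    by_cases hm : m = -1
    · subst hm
      rw [if_pos rfl]
      have hEq : EqOn (fun z : ℂ => f z ^ (-1:ℤ) * deriv f z)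
          (fun z : ℂ => (z - 0)⁻¹ + (u z)⁻¹ * deriv u z) (sphere (0:ℂ) ρ) := by
        intro z hz
        have hz1 : z ∈ ball (0:ℂ) 1 := hsub1 hz
        have h1 : f z ≠ 0 := hfzne z hz
        have h2 : z ≠ 0 := hzne z hz
        have h3 : u z ≠ 0 := hune z (hsub hz)
        have h4 : f z = z * u z := hfu z
        simp only [zpow_neg_one, sub_zero]
        rw [hfderiv z hz1, h4]
        field_simp
      rw [circleIntegral.integral_congr hρ0.le hEq]
      have hi1 : CircleIntegrable (fun z : ℂ => (z - 0)⁻¹) 0 ρ := by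
        apply ContinuousOn.circleIntegrable hρ0.le
        intro z hz
        exact ((continuousWithinAt_id.sub continuousWithinAt_const).inv₀
          (by simpa using hzne z hz))
      have hi2 : CircleIntegrable (fun z : ℂ => (u z)⁻¹ * deriv u z) 0 ρ := by
        apply ContinuousOn.circleIntegrable hρ0.le
        intro z hz
        have hz1 : z ∈ ball (0:ℂ) 1 := hsub1 hz
        exact ((hud z hz1).continuousAt.continuousWithinAt.inv₀ (hune z (hsub hz))).mul
          (hu'd z hz1).continuousAt.continuousWithinAt
      have hadd : (fun z : ℂ => (z - 0)⁻¹ + (u z)⁻¹ * deriv u z)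
          = fun z : ℂ => (z - 0)⁻¹ - (-1 : ℂ) * ((u z)⁻¹ * deriv u z) := by
        funext z; ring
      have hi2' : CircleIntegrable (fun z : ℂ => (-1 : ℂ) * ((u z)⁻¹ * deriv u z)) 0 ρ := by
        have := hi2.neg
        convert this using 1; funext z; simp
      rw [hadd, circleIntegral.integral_sub hi1 hi2', circleIntegral.integral_const_mul]
      have hz0 : (∮ z in C(0, ρ), (z - 0)⁻¹) = 2 * π * Complex.I :=
        circleIntegral.integral_sub_inv_of_mem_ball (mem_ball_self hρ0)
      have hz1 : (∮ z in C(0, ρ), (u z)⁻¹ * deriv u z) = 0 := by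
        apply circleIntegral_eq_zero_of_differentiable_on_off_countable hρ0.le countable_empty
        · intro z hz
          have hz1 : z ∈ ball (0:ℂ) 1 := hδsub ((closedBall_subset_closedBall hρδ) hz)
          have hz2 : z ∈ closedBall (0:ℂ) δ := (closedBall_subset_closedBall hρδ) hz
          exact ((hud z hz1).continuousAt.continuousWithinAt.inv₀ (hune z hz2)).mul
            (hu'd z hz1).continuousAt.continuousWithinAt
        · intro z hz
          have hz1 : z ∈ ball (0:ℂ) 1 := hδsub ((closedBall_subset_closedBall hρδ)
            (ball_subset_closedBall hz.1))
          have hz2 : z ∈ closedBall (0:ℂ) δ := (closedBall_subset_closedBall hρδ)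
            (ball_subset_closedBall hz.1)
          exact ((hud z hz1).inv (hune z hz2)).mul (hu'd z hz1)
      rw [hz0, hz1]
      ring
    · rw [if_neg hm]
      have hC : ((m:ℂ) + 1) ≠ 0 := by
        have h1 : ((m + 1 : ℤ) : ℂ) ≠ 0 := Int.cast_ne_zero.mpr (by omega)
        push_cast at h1; exact h1
      refine circleIntegral.integral_eq_zero_of_hasDerivWithinAt hρ0.le
        (f := fun w => ((m:ℂ)+1)⁻¹ * f w ^ (m+1)) (fun z hz => ?_)
      have h0 := (hasDerivAt_zpow (m+1) (f z) (Or.inl (hfzne z hz))).comp z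
        ((hfd z (hsub1 hz)).hasDerivAt)
      have h2 := h0.const_mul (((m:ℂ)+1)⁻¹)
      have hval : ((m:ℂ)+1)⁻¹ * ((((m+1:ℤ)):ℂ) * f z ^ (m+1-1) * deriv f z)
          = f z ^ m * deriv f z := by
        push_cast
        rw [show (m+1-1 : ℤ) = m by ring]
        field_simp
      rw [← hval]
      exact h2.hasDerivWithinAt
  -- integration by parts
  have hparts : (∮ z in C(0, ρ), f z ^ (-(k:ℤ)))
      = (k:ℂ) * (∮ z in C(0, ρ), g (f z) * (f z ^ (-(k:ℤ)-1) * deriv f z)) := by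
    have hfcW : ∀ z ∈ sphere (0:ℂ) ρ, ContinuousWithinAt f (sphere (0:ℂ) ρ) z :=
      fun z hz => (hfd z (hsub1 hz)).continuousAt.continuousWithinAt
    have hXint : CircleIntegrable (fun z : ℂ => f z ^ (-(k:ℤ))) 0 ρ :=
      ContinuousOn.circleIntegrable hρ0.le (fun z hz =>
        (hfcW z hz).zpow₀ _ (Or.inl (hfzne z hz)))
    have hYint : CircleIntegrable (fun z : ℂ => (k:ℂ) * (z * (f z ^ (-(k:ℤ)-1) * deriv f z))) 0 ρ :=
      ContinuousOn.circleIntegrable hρ0.le (fun z hz =>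
        continuousWithinAt_const.mul (continuousWithinAt_id.mul
          (((hfcW z hz).zpow₀ _ (Or.inl (hfzne z hz))).mul
          (hf'd z (hsub1 hz)).continuousAt.continuousWithinAt)))
    have hder : ∀ z ∈ sphere (0:ℂ) ρ, HasDerivWithinAt (fun w => w * f w ^ (-(k:ℤ)))
        (f z ^ (-(k:ℤ)) - (k:ℂ) * (z * (f z ^ (-(k:ℤ)-1) * deriv f z))) (sphere (0:ℂ) ρ) z := by
      intro z hz
      have h0 := (hasDerivAt_zpow (-(k:ℤ)) (f z) (Or.inl (hfzne z hz))).comp z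
        ((hfd z (hsub1 hz)).hasDerivAt)
      have h1 := (hasDerivAt_id z).mul h0
      simp only [Function.comp_def, id_eq, Int.cast_neg, Int.cast_natCast, one_mul] at h1
      have hval : f z ^ (-(k:ℤ)) + z * (-(k:ℂ) * f z ^ (-(k:ℤ) - 1) * deriv f z)
          = f z ^ (-(k:ℤ)) - (k:ℂ) * (z * (f z ^ (-(k:ℤ)-1) * deriv f z)) := by ring
      rw [← hval]
      exact h1.hasDerivWithinAt
    have h0 : (∮ z in C(0, ρ),
        (f z ^ (-(k:ℤ)) - (k:ℂ) * (z * (f z ^ (-(k:ℤ)-1) * deriv f z)))) = 0 :=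
      circleIntegral.integral_eq_zero_of_hasDerivWithinAt hρ0.le hder
    rw [circleIntegral.integral_sub hXint hYint, sub_eq_zero] at h0
    rw [h0, circleIntegral.integral_const_mul]
    congr 1
    apply circleIntegral.integral_congr hρ0.le
    intro z hz
    simp only
    rw [hgf z (hsub hz)]
  -- series expansion of the integral
  have hB : (∮ z in C(0, ρ), g (f z) * (f z ^ (-(k:ℤ)-1) * deriv f z))
      = q.coeff k * (2 * π * Complex.I) := by
    set W : ℂ → ℂ := fun z => f z ^ (-(k:ℤ)-1) * deriv f z with hWdef
    have hWct : ∀ z ∈ sphere (0:ℂ) ρ, ContinuousAt W z := by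
      intro z hz
      exact ((hfd z (hsub1 hz)).continuousAt.zpow₀ _ (Or.inl (hfzne z hz))).mul
        (hf'd z (hsub1 hz)).continuousAt
    have hWc : ContinuousOn W (sphere (0:ℂ) ρ) := fun z hz => (hWct z hz).continuousWithinAt
    obtain ⟨M, hM⟩ := (isCompact_sphere (0:ℂ) ρ).exists_bound_of_continuousOn hWc
    have hM' : ∀ z ∈ sphere (0:ℂ) ρ, ‖W z‖ ≤ max M 0 :=
      fun z hz => (hM z hz).trans (le_max_left _ _)
    have hTle : ∀ n : ℕ, ‖q.coeff n‖ ≤ ‖q n‖ := by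
      intro n
      have h1 := (q n).le_opNorm (fun _ => (1:ℂ))
      simp only [norm_one, Finset.prod_const_one, mul_one] at h1
      exact h1
    set γ : ℝ → ℂ := circleMap 0 ρ with hγdef
    have hγc : Continuous γ := continuous_circleMap 0 ρ
    have hγsph : ∀ θ : ℝ, γ θ ∈ sphere (0:ℂ) ρ := fun θ => circleMap_mem_sphere 0 hρ0.le θ
    have hγd : ∀ θ : ℝ, ‖deriv γ θ‖ = ρ := by
      intro θ
      simp [hγdef, deriv_circleMap, map_mul, norm_circleMap_zero,
        _root_.abs_of_nonneg hρ0.le]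
    have hγdc : Continuous (deriv γ) := by
      have hd : deriv γ = fun θ => circleMap 0 ρ θ * Complex.I := by
        funext θ; exact deriv_circleMap 0 ρ θ
      rw [hd]; exact hγc.mul continuous_const
    have hfγ : Continuous fun θ => f (γ θ) :=
      continuous_iff_continuousAt.mpr fun θ =>
        ((hfd _ (hsub1 (hγsph θ))).continuousAt).comp hγc.continuousAt
    have hWγ : Continuous fun θ => W (γ θ) :=
      continuous_iff_continuousAt.mpr fun θ => (hWct _ (hγsph θ)).comp hγc.continuousAt
    have hfγs : ∀ θ, ‖f (γ θ)‖ ≤ (s:ℝ) := fun θ => (hρs _ (hsph _ (hγsph θ))).le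
    have hgs : ∀ θ : ℝ, HasSum (fun n : ℕ => f (γ θ) ^ n * q.coeff n) (g (f (γ θ))) := by
      intro θ
      have hmem : f (γ θ) ∈ Metric.eball (0:ℂ) r := by
        rw [mem_eball_zero_iff]
        refine lt_of_lt_of_le ?_ hsr.le
        exact_mod_cast hρs _ (hsph _ (hγsph θ))
      have h0 := hq.hasSum hmem
      simp only [zero_add] at h0
      have h1 : ∀ n : ℕ, (q n fun _ => f (γ θ)) = f (γ θ) ^ n * q.coeff n := by
        intro n; rw [q.apply_eq_pow_smul_coeff, smul_eq_mul]
      simp only [h1] at h0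
      exact h0
    set F : ℕ → C(ℝ, ℂ) := fun n =>
      ⟨fun θ => deriv γ θ * (f (γ θ) ^ n * q.coeff n * W (γ θ)),
        hγdc.mul (((hfγ.pow n).mul continuous_const).mul hWγ)⟩ with hFdef
    have hFsum : ∀ θ : ℝ, HasSum (fun n => F n θ) (deriv γ θ * (g (f (γ θ)) * W (γ θ))) :=
      fun θ => ((hgs θ).mul_right (W (γ θ))).mul_left (deriv γ θ)
    have hFle : ∀ (n : ℕ) (θ : ℝ), ‖F n θ‖ ≤ ρ * ((s:ℝ)^n * ‖q n‖ * max M 0) := by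
      intro n θ
      simp only [hFdef, ContinuousMap.coe_mk]
      rw [norm_mul, hγd θ]
      apply mul_le_mul_of_nonneg_left _ hρ0.le
      rw [norm_mul, norm_mul, norm_pow]
      have h1 : ‖f (γ θ)‖ ^ n ≤ (s:ℝ)^n :=
        pow_le_pow_left₀ (norm_nonneg _) (hfγs θ) n
      exact mul_le_mul (mul_le_mul h1 (hTle n) (norm_nonneg _) (by positivity))
        (hM' _ (hγsph θ)) (norm_nonneg _) (by positivity)
    have hsum0 : Summable fun n : ℕ => ‖q n‖ * (s:ℝ)^n :=
      q.summable_norm_mul_pow (lt_of_lt_of_le hsr hq.r_le)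
    have hsum : Summable fun n : ℕ => ρ * ((s:ℝ)^n * ‖q n‖ * max M 0) := by
      have h2 := hsum0.mul_left (ρ * max M 0)
      exact h2.congr fun n => by ring
    have hnorm_sum : Summable fun n : ℕ =>
        ‖(F n).restrict (⟨uIcc (0:ℝ) (2*π), isCompact_uIcc⟩ : TopologicalSpace.Compacts ℝ)‖ := by
      apply Summable.of_nonneg_of_le (fun n => norm_nonneg _) _ hsum
      intro n
      rw [ContinuousMap.norm_le _ (by positivity)]
      intro x
      simpa [ContinuousMap.restrict_apply] using hFle n x
    have hHS := intervalIntegral.hasSum_intervalIntegral_of_summable_norm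
      (a := 0) (b := 2*π) hnorm_sum
    have htot : (∫ θ in (0:ℝ)..2*π, ∑' n, F n θ)
        = ∮ z in C(0, ρ), g (f z) * W z := by
      simp only [circleIntegral]
      apply intervalIntegral.integral_congr
      intro θ _
      dsimp only
      rw [(hFsum θ).tsum_eq]
      simp only [smul_eq_mul, hγdef]
    have hterm : ∀ n : ℕ, (∫ θ in (0:ℝ)..2*π, F n θ)
        = q.coeff n * (if n = k then 2 * π * Complex.I else 0) := by
      intro n
      have h1 : (∫ θ in (0:ℝ)..2*π, F n θ)
          = ∮ z in C(0, ρ), q.coeff n * (f z ^ n * W z) := by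
        simp only [circleIntegral]
        apply intervalIntegral.integral_congr
        intro θ _
        simp only [hFdef, ContinuousMap.coe_mk, smul_eq_mul, hγdef]
        ring
      rw [h1, circleIntegral.integral_const_mul]
      congr 1
      have h2 : EqOn (fun z : ℂ => f z ^ n * W z)
          (fun z : ℂ => f z ^ ((n:ℤ) + (-(k:ℤ)-1)) * deriv f z) (sphere (0:ℂ) ρ) := by
        intro z hz
        simp only [hWdef]
        rw [← zpow_natCast (f z) n, ← mul_assoc, ← zpow_add₀ (hfzne z hz)]
      rw [circleIntegral.integral_congr hρ0.le h2, key]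
      by_cases hnk : n = k
      · subst hnk
        rw [if_pos (by push_cast; ring), if_pos rfl]
      · rw [if_neg (fun hcon => hnk (by omega)), if_neg hnk]
    have hsingle : HasSum (fun n : ℕ => q.coeff n * (if n = k then 2 * π * Complex.I else 0))
        (q.coeff k * (2 * π * Complex.I)) := by
      have h3 := hasSum_single
        (f := fun n : ℕ => q.coeff n * (if n = k then 2 * π * Complex.I else 0)) k
        (fun n hn => by simp [hn])
      simpa using h3
    have hHS' : HasSum (fun n : ℕ => q.coeff n * (if n = k then 2 * π * Complex.I else 0))
        (∮ z in C(0, ρ), g (f z) * W z) := by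
      rw [← htot]
      have h4 : (fun n : ℕ => q.coeff n * (if n = k then 2 * π * Complex.I else 0))
          = fun n : ℕ => ∫ θ in (0:ℝ)..2*π, F n θ := funext fun n => (hterm n).symm
      rw [h4]
      exact hHS
    exact hHS'.unique hsingle
  -- annulus
  have hann : (∮ z in C(0, δ), f z ^ (-(k:ℤ))) = ∮ z in C(0, ρ), f z ^ (-(k:ℤ)) := by
    apply circleIntegral_eq_of_differentiable_on_annulus_off_countable hρ0 hρδ countable_empty
    · intro z hz
      have hz1 : z ∈ closedBall (0:ℂ) δ := hz.1
      have hzne' : z ≠ 0 := by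
        intro h0; rw [h0] at hz; exact hz.2 (mem_ball_self hρ0)
      exact ((hfd z (hδsub hz1)).continuousAt.continuousWithinAt).zpow₀ _
        (Or.inl (hfne z hz1 hzne'))
    · intro z hz
      obtain ⟨⟨hz1, hz2⟩, -⟩ := hz
      have hz1' : z ∈ closedBall (0:ℂ) δ := ball_subset_closedBall hz1
      have hzne' : z ≠ 0 := fun h0 => hz2 (by rw [h0]; exact mem_closedBall_self hρ0.le)
      exact (hfd z (hδsub hz1')).zpow (Or.inl (hfne z hz1' hzne'))
  -- symmetry
  set h : ℝ → ℂ := fun θ => f (δ * Complex.exp (θ * Complex.I)) ^ (-(k:ℤ)) *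
    (Complex.I * δ * Complex.exp (θ * Complex.I)) with hh
  have hkodd' : Odd (-(k:ℤ)) := by
    obtain ⟨j, hj⟩ := hk
    exact ⟨-(j:ℤ) - 1, by push_cast [hj]; ring⟩
  have hzθ : ∀ θ : ℝ, ((δ:ℂ) * Complex.exp ((θ:ℂ) * Complex.I)) ∈ closedBall (0:ℂ) δ := by
    intro θ
    rw [mem_closedBall_zero_iff, norm_mul]
    simp [Complex.norm_exp_ofReal_mul_I, Complex.norm_real,
      _root_.abs_of_nonneg hδ0.le]
  have hδcirc : (∮ z in C(0, δ), f z ^ (-(k:ℤ))) = ∫ θ in (0:ℝ)..2*π, h θ := by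
    simp only [circleIntegral]
    apply intervalIntegral.integral_congr
    intro θ _
    simp only [hh, deriv_circleMap, circleMap, smul_eq_mul, zero_add]
    ring
  have hcont : Continuous h := by
    rw [hh]
    have hec : Continuous fun θ : ℝ => Complex.exp ((θ:ℂ) * Complex.I) :=
      Complex.continuous_exp.comp (Complex.continuous_ofReal.mul continuous_const)
    apply Continuous.mul
    · apply continuous_iff_continuousAt.mpr
      intro θ
      have hne : f ((δ:ℂ) * Complex.exp ((θ:ℂ) * Complex.I)) ≠ 0 :=
        hfne _ (hzθ θ) (mul_ne_zero (by exact_mod_cast hδ0.ne') (Complex.exp_ne_zero _))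
      have hfc : ContinuousAt f ((δ:ℂ) * Complex.exp ((θ:ℂ) * Complex.I)) :=
        (hfd _ (hδsub (hzθ θ))).continuousAt
      have hin : ContinuousAt (fun θ : ℝ => (δ:ℂ) * Complex.exp ((θ:ℂ) * Complex.I)) θ :=
        (continuous_const.mul hec).continuousAt
      have hcomp : ContinuousAt (f ∘ (fun θ : ℝ => (δ:ℂ) * Complex.exp ((θ:ℂ) * Complex.I))) θ :=
        ContinuousAt.comp hfc hin
      exact ContinuousAt.zpow₀ hcomp _ (Or.inl hne)
    · exact (continuous_const.mul hec)
  have hint : ∀ aa bb : ℝ, IntervalIntegrable h MeasureTheory.volume aa bb :=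
    fun aa bb => hcont.intervalIntegrable aa bb
  have hper : ∀ θ : ℝ, h (θ + π) = h θ := by
    intro θ
    have hexp : Complex.exp ((↑(θ + π):ℂ) * Complex.I) = - Complex.exp ((θ:ℂ) * Complex.I) := by
      push_cast
      rw [add_mul, Complex.exp_add, Complex.exp_pi_mul_I]
      ring
    simp only [hh, hexp]
    have hf2 : f ((δ:ℂ) * -Complex.exp ((θ:ℂ) * Complex.I))
        = - f ((δ:ℂ) * Complex.exp ((θ:ℂ) * Complex.I)) := by
      rw [show (δ:ℂ) * -Complex.exp ((θ:ℂ) * Complex.I)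
        = -((δ:ℂ) * Complex.exp ((θ:ℂ) * Complex.I)) by ring, hodd]
    rw [hf2, Odd.neg_zpow hkodd']
    ring
  have hrefl : ∀ θ : ℝ, h (π - θ) = - (starRingEnd ℂ) (h θ) := by
    intro θ
    have hconje : (starRingEnd ℂ) (Complex.exp ((θ:ℂ) * Complex.I))
        = Complex.exp (-((θ:ℂ) * Complex.I)) := by
      rw [← Complex.exp_conj]
      congr 1
      simp [map_mul, Complex.conj_ofReal, Complex.conj_I]
    have hexp : Complex.exp ((↑(π - θ):ℂ) * Complex.I)
        = - (starRingEnd ℂ) (Complex.exp ((θ:ℂ) * Complex.I)) := by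
      rw [hconje]
      push_cast
      rw [sub_mul, Complex.exp_sub, Complex.exp_pi_mul_I, Complex.exp_neg]
      field_simp
    simp only [hh, hexp]
    have harg : (δ:ℂ) * -(starRingEnd ℂ) (Complex.exp ((θ:ℂ) * Complex.I))
        = -((starRingEnd ℂ) ((δ:ℂ) * Complex.exp ((θ:ℂ) * Complex.I))) := by
      rw [map_mul, Complex.conj_ofReal]; ring
    rw [harg, hodd, hconj _ (hzθ θ), Odd.neg_zpow hkodd', ← map_zpow₀]
    simp only [map_mul, Complex.conj_I, Complex.conj_ofReal, hconje]
    ring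
  have hsym : (∫ θ in (0:ℝ)..2*π, h θ)
      = 2 * ((∫ θ in (0:ℝ)..π/2, h θ) - (starRingEnd ℂ) (∫ θ in (0:ℝ)..π/2, h θ)) := by
    have h1 : (∫ θ in (0:ℝ)..2*π, h θ) = (∫ θ in (0:ℝ)..π, h θ) + ∫ θ in π..(2*π), h θ :=
      (intervalIntegral.integral_add_adjacent_intervals (hint 0 π) (hint π (2*π))).symm
    have h2 : (∫ θ in π..(2*π), h θ) = ∫ θ in (0:ℝ)..π, h θ := by
      have h2a := intervalIntegral.integral_comp_add_right (a := 0) (b := π) (f := h) π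
      rw [zero_add, show π + π = 2*π by ring] at h2a
      rw [← h2a]
      exact intervalIntegral.integral_congr fun θ _ => hper θ
    have h3 : (∫ θ in (0:ℝ)..π, h θ) = (∫ θ in (0:ℝ)..π/2, h θ) + ∫ θ in (π/2)..π, h θ :=
      (intervalIntegral.integral_add_adjacent_intervals (hint 0 (π/2)) (hint (π/2) π)).symm
    have h4 : (∫ θ in (π/2)..π, h θ) = - (starRingEnd ℂ) (∫ θ in (0:ℝ)..π/2, h θ) := by
      have h5 := intervalIntegral.integral_comp_sub_left (a := 0) (b := π/2) (f := h) π
      rw [sub_zero, show π - π/2 = π/2 by ring] at h5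
      rw [← h5]
      have h6 : (∫ θ in (0:ℝ)..π/2, h (π - θ))
          = ∫ θ in (0:ℝ)..π/2, -((starRingEnd ℂ) (h θ)) :=
        intervalIntegral.integral_congr fun θ _ => hrefl θ
      rw [h6, intervalIntegral.integral_neg]
      congr 1
      have h7 := ContinuousLinearMap.intervalIntegral_comp_comm
        (Complex.conjCLE.toContinuousLinearMap : ℂ →L[ℝ] ℂ) (hint 0 (π/2))
      simpa using h7
    rw [h1, h2, h3, h4]
    ring
  -- taylor coefficient
  have htay : taylorCoeff g k = q.coeff k := by
    have h1 := hq.factorial_smul (1:ℂ) k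
    rw [q.apply_eq_pow_smul_coeff, one_pow, one_smul] at h1
    have hne : ((k.factorial : ℂ)) ≠ 0 := Nat.cast_ne_zero.mpr k.factorial_ne_zero
    rw [taylorCoeff, iteratedDeriv, ← h1, nsmul_eq_mul]
    exact mul_div_cancel_left₀ _ hne
  -- final assembly
  set I1 : ℂ := ∫ θ in (0:ℝ)..π/2, h θ with hI1
  have hmain : (k:ℂ) * (q.coeff k * (2 * π * Complex.I)) = 2 * (I1 - (starRingEnd ℂ) I1) := by
    rw [← hB, ← hparts, ← hann, hδcirc, hsym]
  rw [htay]
  have hsc : I1 - (starRingEnd ℂ) I1 = (2 * I1.im : ℝ) * Complex.I := Complex.sub_conj I1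
  rw [hsc] at hmain
  have hπ : (π:ℂ) ≠ 0 := by exact_mod_cast Real.pi_ne_zero
  have hk0 : (k:ℂ) ≠ 0 := Nat.cast_ne_zero.mpr (by omega)
  have hπk : (π:ℂ) * k ≠ 0 := mul_ne_zero hπ hk0
  have h2I : (2:ℂ) * Complex.I ≠ 0 := by simp [Complex.I_ne_zero]
  have hfin : q.coeff k * ((π:ℂ) * k) = 2 * (I1.im:ℂ) := by
    apply mul_right_cancel₀ h2I
    push_cast at hmain
    linear_combination hmain
  have hcast : ((2 / (π * (k:ℝ)) * I1.im : ℝ) : ℂ) = 2 / ((π:ℂ) * k) * (I1.im:ℂ) := by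
    push_cast; ring
  rw [hcast, div_mul_eq_mul_div, eq_div_iff hπk]
  linear_combination hfin

theorem inversion_formula (a b : ℝ) (ha : a ∈ Set.Ico (0 : ℝ) 1)
    (hb : b ∈ Set.Ico (0 : ℝ) 1) :
    ∃ δ : ℝ, 0 < δ ∧ δ < 1 ∧
      ∀ g : ℂ → ℂ, IsLocalInverseAtZero (fbarC a b) g →
        (∀ z : ℂ, ‖z‖ ≤ δ → AnalyticAt ℂ g (fbarC a b z)) →
        ∀ k : ℕ, Odd k → 1 ≤ k →
          taylorCoeff g k =
            (((2 / (Real.pi * k)) *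
                (∫ θ in (0 : ℝ)..(Real.pi / 2),
                  (fbarC a b (δ * Complex.exp (θ * Complex.I))) ^ (-(k : ℤ)) *
                    (Complex.I * δ * Complex.exp (θ * Complex.I))).im : ℝ) : ℂ) := by
  have hc : ∀ k, |ckab a b k| ≤ 1 := fun k => by
    rw [abs_of_nonneg (ckab_nonneg ha hb k)]; exact ckab_le_one ha hb k
  set u : ℂ → ℂ := fun z => Vs (ckab a b) (z^2) with hudef
  have hfu : ∀ z, fbarC a b z = z * u z := fun z => fbar_eq_mul a b z
  have hud : ∀ z ∈ ball (0:ℂ) 1, DifferentiableAt ℂ u z := by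
    intro z hz
    have h2 : ‖z^2‖ < 1 := by
      rw [norm_pow]
      exact pow_lt_one₀ (norm_nonneg _) (mem_ball_zero_iff.mp hz) two_ne_zero
    have h3 : DifferentiableAt ℂ (Vs (ckab a b) ∘ (fun z : ℂ => z^2)) z :=
      DifferentiableAt.comp z (Vs_diffAt hc h2) (differentiable_pow 2).differentiableAt
    exact h3
  have hu0 : u 0 = 1 := by
    rw [hudef]
    simp only [ne_eq, OfNat.ofNat_ne_zero, not_false_eq_true, zero_pow]
    rw [Vs_zero, ckab_zero]; norm_num
  have hucont : ContinuousAt u 0 := (hud 0 (by simp)).continuousAt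
  obtain ⟨ε, hε0, hεball⟩ : ∃ ε > 0, ∀ z ∈ ball (0:ℂ) ε, ‖u z - 1‖ < 1/2 := by
    apply Metric.eventually_nhds_iff_ball.mp
    have h1 := hucont.tendsto (Metric.ball_mem_nhds (u 0) one_half_pos)
    filter_upwards [h1] with z hz
    rw [hu0] at hz
    exact mem_ball_iff_norm.mp hz
  set δ : ℝ := min (ε/2) (1/2) with hδdef
  have hδ0 : 0 < δ := lt_min (by positivity) one_half_pos
  have hδ1 : δ < 1 := lt_of_le_of_lt (min_le_right _ _) one_half_lt_one
  have hune : ∀ z ∈ closedBall (0:ℂ) δ, u z ≠ 0 := by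
    intro z hz h0
    have h1 : ‖u z - 1‖ < 1/2 := by
      apply hεball
      rw [mem_ball_zero_iff]
      calc ‖z‖ ≤ δ := mem_closedBall_zero_iff.mp hz
        _ ≤ ε/2 := min_le_left _ _
        _ < ε := by linarith
    rw [h0] at h1
    norm_num at h1
  refine ⟨δ, hδ0, hδ1, ?_⟩
  intro g hg hgan k hkodd hk1
  have hgan' : ∀ z ∈ closedBall (0:ℂ) δ, AnalyticAt ℂ g (fbarC a b z) := fun z hz =>
    hgan z (by exact mem_closedBall_zero_iff.mp hz)
  have hfanz : ∀ z ∈ closedBall (0:ℂ) δ, AnalyticAt ℂ (fbarC a b) z := by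
    have hfdo : DifferentiableOn ℂ (fbarC a b) (ball (0:ℂ) 1) := by
      intro z hz
      have h1 : DifferentiableAt ℂ (fun z : ℂ => z * u z) z :=
        differentiableAt_id.mul (hud z hz)
      have h2 : (fun z : ℂ => z * u z) = fbarC a b := funext fun z => (hfu z).symm
      rw [h2] at h1
      exact h1.differentiableWithinAt
    intro z hz
    exact hfdo.analyticOnNhd isOpen_ball z (closedBall_subset_ball hδ1 hz)
  have hgf : ∀ z ∈ closedBall (0:ℂ) δ, g (fbarC a b z) = z := by
    have hcomp : AnalyticOnNhd ℂ (fun z => g (fbarC a b z) - z) (closedBall (0:ℂ) δ) := by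
      intro z hz
      exact ((hgan' z hz).comp (hfanz z hz)).sub analyticAt_id
    have hpre : IsPreconnected (closedBall (0:ℂ) δ) := (convex_closedBall _ _).isPreconnected
    have h0mem : (0:ℂ) ∈ closedBall (0:ℂ) δ := mem_closedBall_self hδ0.le
    have hev0 : (fun z => g (fbarC a b z) - z) =ᶠ[nhds (0:ℂ)] 0 := by
      filter_upwards [hg.2] with z hz
      simp [hz]
    have heq := hcomp.eqOn_zero_of_preconnected_of_eventuallyEq_zero hpre h0mem hev0
    intro z hz
    have h2 := heq hz
    simpa [sub_eq_zero] using h2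
  have hf0 : fbarC a b 0 = 0 := by rw [hfu]; ring
  have hgan0 : AnalyticAt ℂ g 0 := by
    have h1 := hgan' 0 (mem_closedBall_self hδ0.le)
    rwa [hf0] at h1
  exact coeff_formula hδ0 hδ1 hfu hud hune (fbar_odd a b)
    (fun z _ => fbar_conj a b z) hgf hgan0 hkodd hk1
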